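/- Let R be an additive commutative group, E a type with decidable equality, and h ≥ 1 a natural number. Suppose we are given e_i^S, e_i^R ∈ E and v_i^S, v_i^R ∈ R for i ∈ [h], together with values satisfying: (i) b_i^S, b_i^R ∈ ZMod 2 with b_i^S + b_i^R = 1 if e_i^S = e_i^R and b_i^S + b_i^R = 0 otherwise; (ii) t_i^S, t_i^R ∈ R with t_i^S + t_i^R = v_i^S + v_i^R if b_i^S + b_i^R = 1 and t_i^S + t_i^R = 0 otherwise; (iii) b^S = ∑_i b_i^S, b^R = ∑_i b_i^R (in ZMod 2), t^S = ∑_i t_i^S, t^R = ∑_i t_i^R; (iv) arbitrary r^S, r^R ∈ R, and m^S, m^R ∈ R with m^S + m^R = (t^S − r^S) + (t^R − r^R) if b^S + b^R = 1 and m^S + m^R = 0 otherwise; (v) z^S = m^S + r^S and z^R = m^R + r^R. Then: if there is exactly one index i* ∈ [h] with e_{i*}^S = e_{i*}^R, it holds that z^S + z^R = v_{i*}^S + v_{i*}^R; and if there is no index i with e_i^S = e_i^R, it holds that z^S + z^R = r^S + r^R. -/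

import Mathlib

/-- **Correctness of the random equality-conditional selection protocol `EQSel`.**
Given secret-shared conditions `(eᵢ^S, eᵢ^R)` and payloads `(vᵢ^S, vᵢ^R)`, shares of the
equality indicators (`ssPEQT`), shares produced by the `MUX` functionality, and the
final masked outputs `z^S, z^R`: if exactly one condition `e_{i*}^S = e_{i*}^R` holds,
then `z^S + z^R = v_{i*}^S + v_{i*}^R`; if no condition holds, then
`z^S + z^R = r^S + r^R`. -/
theorem eqsel_correct {R : Type*} [AddCommGroup R] {E : Type*} [DecidableEq E]
    {h : ℕ} (hh : 1 ≤ h)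
    (eS eR : Fin h → E) (vS vR : Fin h → R)
    (bS bR : Fin h → ZMod 2)
    (hb : ∀ i, bS i + bR i = if eS i = eR i then 1 else 0)
    (tS tR : Fin h → R)
    (ht : ∀ i, tS i + tR i = if bS i + bR i = 1 then vS i + vR i else 0)
    (BS BR : ZMod 2) (hBS : BS = ∑ i, bS i) (hBR : BR = ∑ i, bR i)
    (TS TR : R) (hTS : TS = ∑ i, tS i) (hTR : TR = ∑ i, tR i)
    (rS rR mS mR : R)
    (hm : mS + mR = if BS + BR = 1 then (TS - rS) + (TR - rR) else 0)
    (zS zR : R) (hzS : zS = mS + rS) (hzR : zR = mR + rR) :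
    (∀ istar : Fin h, eS istar = eR istar → (∀ i, eS i = eR i → i = istar) →
      zS + zR = vS istar + vR istar) ∧
    ((∀ i, eS i ≠ eR i) → zS + zR = rS + rR) := by
  have hBsum : BS + BR = ∑ i, (bS i + bR i) := by
    rw [hBS, hBR, Finset.sum_add_distrib]
  have hTsum : TS + TR = ∑ i, (tS i + tR i) := by
    rw [hTS, hTR, Finset.sum_add_distrib]
  constructor
  · intro istar heq huniq
    have hB1 : BS + BR = 1 := by
      rw [hBsum]
      have := Finset.sum_eq_single (M := ZMod 2) (s := Finset.univ)
        (f := fun i => bS i + bR i) istar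
        (fun i _ hne => by
          show bS i + bR i = 0
          rw [hb i, if_neg]
          intro he; exact hne (huniq i he))
        (fun habs => absurd (Finset.mem_univ istar) habs)
      rw [this]; show bS istar + bR istar = 1
      rw [hb istar, if_pos heq]
    have hT : TS + TR = vS istar + vR istar := by
      rw [hTsum]
      have := Finset.sum_eq_single (s := Finset.univ)
        (f := fun i => tS i + tR i) istar
        (fun i _ hne => by
          show tS i + tR i = 0
          rw [ht i, if_neg]
          rw [hb i, if_neg (fun he => hne (huniq i he))]
          decide)
        (fun habs => absurd (Finset.mem_univ istar) habs)
      rw [this]; show tS istar + tR istar = vS istar + vR istar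
      rw [ht istar, hb istar, if_pos heq, if_pos rfl]
    have hm' : mS + mR = TS - rS + (TR - rR) := by rw [hm, if_pos hB1]
    calc zS + zR = (mS + mR) + rS + rR := by rw [hzS, hzR]; abel
      _ = (TS - rS + (TR - rR)) + rS + rR := by rw [hm']
      _ = TS + TR := by abel
      _ = _ := hT
  · intro hne
    have hB0 : BS + BR = 0 := by
      rw [hBsum]
      apply Finset.sum_eq_zero
      intro i _
      rw [hb i, if_neg (hne i)]
    have hm' : mS + mR = 0 := by rw [hm, if_neg (by rw [hB0]; decide)]
    calc zS + zR = (mS + mR) + rS + rR := by rw [hzS, hzR]; abel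
      _ = rS + rR := by rw [hm', zero_add]
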